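/- Let m ≥ 2 be odd and let w be the chain pomset weight on (ZMod m)^n. For the code C = {v : v_i = 0 for i ≤ n-k} (with 1 ≤ k ≤ n), the minimum weight of a nonzero codeword is (n-k)⌊m/2⌋ + 1. -/
import Mathlib


/-- The Lee weight on `ZMod m`. -/
def leeWeight (m : ℕ) (x : ZMod m) : ℕ := min x.val (m - x.val)

/-- The chain (NRT-type) pomset weight on `(ZMod m)^n`: the Lee weight of the
top nonzero coordinate plus `⌊m/2⌋` for each coordinate below it. -/
noncomputable def chainWeight (m n : ℕ) (v : Fin n → ZMod m) : ℕ :=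
  if h : v = 0 then 0
  else
    let t : Fin n := (Finset.univ.filter fun i => v i ≠ 0).max' (by
      rw [Finset.filter_nonempty_iff]
      obtain ⟨i, hi⟩ := Function.ne_iff.mp h
      exact ⟨i, Finset.mem_univ i, by simpa using hi⟩)
    leeWeight m (v t) + t.val * (m / 2)

lemma leeWeight_pos (m : ℕ) (hm : 2 ≤ m) (x : ZMod m) (hx : x ≠ 0) :
    1 ≤ leeWeight m x := by
  haveI : NeZero m := ⟨by omega⟩
  have h1 : 1 ≤ x.val := Nat.one_le_iff_ne_zero.mpr (fun h => hx ((ZMod.val_eq_zero _).mp h))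
  have h2 : x.val < m := ZMod.val_lt x
  simp only [leeWeight, le_min_iff]
  omega

theorem chain_code_min_weight (m n k : ℕ) (hm : 2 ≤ m) (hmodd : Odd m)
    (hk1 : 1 ≤ k) (hkn : k ≤ n) :
    letI C : Set (Fin n → ZMod m) := {v | ∀ i : Fin n, (i : ℕ) < n - k → v i = 0}
    (∀ v ∈ C, v ≠ 0 → (n - k) * (m / 2) + 1 ≤ chainWeight m n v) ∧
      (∃ v ∈ C, v ≠ 0 ∧ chainWeight m n v = (n - k) * (m / 2) + 1) := by
  haveI : NeZero m := ⟨by omega⟩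
  constructor
  · intro v hv hv0
    rw [chainWeight, dif_neg hv0]
    set S := Finset.univ.filter fun i => v i ≠ 0 with hS
    have hne : S.Nonempty := by
      rw [hS, Finset.filter_nonempty_iff]
      obtain ⟨i, hi⟩ := Function.ne_iff.mp hv0
      exact ⟨i, Finset.mem_univ i, by simpa using hi⟩
    set t := S.max' hne with ht
    have htS : t ∈ S := S.max'_mem hne
    have hvt : v t ≠ 0 := by
      rw [hS, Finset.mem_filter] at htS; exact htS.2
    have hge : n - k ≤ t.val := by
      by_contra h
      exact hvt (hv t (by omega))
    have hlee := leeWeight_pos m hm (v t) hvt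
    have : n - k ≤ (t : ℕ) := hge
    calc (n - k) * (m / 2) + 1 ≤ t.val * (m / 2) + leeWeight m (v t) := by
          have := Nat.mul_le_mul_right (m / 2) hge
          omega
      _ = leeWeight m (v t) + t.val * (m / 2) := by ring
  · have hnk : n - k < n := by omega
    set t0 : Fin n := ⟨n - k, hnk⟩ with ht0
    set v : Fin n → ZMod m := fun i => if i = t0 then 1 else 0 with hv
    have hvt0 : v t0 = 1 := by simp [hv]
    haveI : Fact (1 < m) := ⟨by omega⟩
    have h1 : (1 : ZMod m) ≠ 0 := one_ne_zero
    have hv0 : v ≠ 0 := by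
      intro h
      have : v t0 = 0 := by rw [h]; rfl
      rw [hvt0] at this
      exact h1 this
    refine ⟨v, ?_, hv0, ?_⟩
    · intro i hi
      have : i ≠ t0 := by
        intro h; rw [h] at hi; simp [ht0] at hi
      simp [hv, this]
    · rw [chainWeight, dif_neg hv0]
      have hSet : (Finset.univ.filter fun i => v i ≠ 0) = {t0} := by
        ext i
        simp only [Finset.mem_filter, Finset.mem_univ, true_and, Finset.mem_singleton, hv]
        constructor
        · intro h
          by_contra hne
          simp [hne] at h
        · intro h; subst h; simpa using h1
      simp only [hSet]
      rw [Finset.max'_singleton]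
      have hlee : leeWeight m (v t0) = 1 := by
        rw [hvt0, leeWeight, ZMod.val_one_eq_one_mod, Nat.mod_eq_of_lt (by omega)]
        omega
      rw [hlee]
      simp [ht0]
      ring
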